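/- For every connection form ω there exists a unique pair (ωˢ, S) such that ω = ωˢ + S, where ωˢ is a semi-teleparallel connection form with respect to {v, b₁, b₂, b₃} and S : V → End(V) is linear with each S(u) η-skew and with vanishing spatial part in the triad directions, i.e. h ∘ S(bᵢ) ∘ h = 0 for i = 1,2,3. -/

import Mathlib

open Finset

/- Minkowski space V = ℝ⁴ with bilinear form η. -/
abbrev V4 := Fin 4 → ℝ

def eta (x y : V4) : ℝ := -(x 0 * y 0) + x 1 * y 1 + x 2 * y 2 + x 3 * y 3

/-- `f : V → V` is linear. -/
def IsLin (f : V4 → V4) : Prop :=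
  (∀ x y, f (x + y) = f x + f y) ∧ ∀ (c : ℝ) (x : V4), f (c • x) = c • f x

/-- `f` is η-skew: η(f x, y) = −η(x, f y). -/
def IsSkew (f : V4 → V4) : Prop := ∀ x y, eta (f x) y = - eta x (f y)

/-- A connection form: a linear map `ω : V → End V` with each `ω u` η-skew. -/
def ConnForm (ω : V4 → V4 → V4) : Prop :=
  (∀ u u', ω (u + u') = ω u + ω u') ∧ (∀ (c : ℝ) (u : V4), ω (c • u) = c • ω u) ∧
  (∀ u, IsLin (ω u)) ∧ (∀ u, IsSkew (ω u))

/-- `ω` is semi-teleparallel w.r.t. `{v, b₁, b₂, b₃}`: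
`dv(u) + ω(u)v = 0` for all `u` and `dbᵢ(v) + ω(v)bᵢ = 0`. -/
def SemiTeleparallel (v : V4) (dv : V4 → V4) (b : Fin 3 → V4) (db : Fin 3 → V4 → V4)
    (ω : V4 → V4 → V4) : Prop :=
  (∀ u, dv u + ω u v = 0) ∧ ∀ i, db i v + ω v (b i) = 0

/-- Projection onto the η-orthogonal complement of `v`:  h(x) = x + η(v,x)·v. -/
def proj (v : V4) (x : V4) : V4 := x + eta v x • v

/-- The pair `(ωˢ, S)` decomposes `ω`: `ωˢ` is a semi-teleparallel connection form,
`S : V → End V` is linear, each `S u` is η-skew, `h ∘ S(bᵢ) ∘ h = 0`, and `ω = ωˢ + S`. -/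
def GoodPairS (v : V4) (dv : V4 → V4) (b : Fin 3 → V4) (db : Fin 3 → V4 → V4)
    (ω : V4 → V4 → V4) (p : (V4 → V4 → V4) × (V4 → V4 → V4)) : Prop :=
  ConnForm p.1 ∧ SemiTeleparallel v dv b db p.1 ∧
  (∀ u u', p.2 (u + u') = p.2 u + p.2 u') ∧
  (∀ (c : ℝ) (u : V4), p.2 (c • u) = c • p.2 u) ∧
  (∀ u, IsLin (p.2 u)) ∧ (∀ u, IsSkew (p.2 u)) ∧
  (∀ i, ∀ x, proj v (p.2 (b i) (proj v x)) = 0) ∧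
  (∀ u x, ω u x = p.1 u x + p.2 u x)

/-! ### Auxiliary lemmas -/

lemma eta_symm (x y : V4) : eta x y = eta y x := by simp only [eta]; ring
lemma eta_add_left (x y z : V4) : eta (x + y) z = eta x z + eta y z := by
  simp only [eta, Pi.add_apply]; ring
lemma eta_smul_left (c : ℝ) (x z : V4) : eta (c • x) z = c * eta x z := by
  simp only [eta, Pi.smul_apply, smul_eq_mul]; ring
lemma eta_add_right (x y z : V4) : eta x (y + z) = eta x y + eta x z := by
  simp only [eta, Pi.add_apply]; ring
lemma eta_smul_right (c : ℝ) (x z : V4) : eta x (c • z) = c * eta x z := by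
  simp only [eta, Pi.smul_apply, smul_eq_mul]; ring
lemma eta_sub_left (x y z : V4) : eta (x - y) z = eta x z - eta y z := by
  simp only [eta, Pi.sub_apply]; ring
lemma eta_sub_right (x y z : V4) : eta x (y - z) = eta x y - eta x z := by
  simp only [eta, Pi.sub_apply]; ring
lemma eta_neg_left (x z : V4) : eta (-x) z = - eta x z := by
  simp only [eta, Pi.neg_apply]; ring
lemma eta_neg_right (x z : V4) : eta x (-z) = - eta x z := by
  simp only [eta, Pi.neg_apply]; ring
lemma eta_zero_left (z : V4) : eta 0 z = 0 := by simp [eta]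
lemma eta_zero_right (z : V4) : eta z 0 = 0 := by simp [eta]

lemma complete (v : V4) (hv : eta v v = -1)
    (b : Fin 3 → V4) (hb : ∀ i j, eta (b i) (b j) = if i = j then 1 else 0)
    (hvb : ∀ i, eta v (b i) = 0) (u : V4) :
    u = -(eta v u) • v + eta (b 0) u • b 0 + eta (b 1) u • b 1 + eta (b 2) u • b 2 := by
  have hsym : ∀ x y : V4, eta x y = eta y x := fun x y => by simp only [eta]; ring
  have hbv : ∀ i, eta (b i) v = 0 := fun i => by rw [hsym]; exact hvb i
  have hbb : ∀ i j : Fin 3, i ≠ j → eta (b i) (b j) = 0 := fun i j hij => by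
    rw [hb, if_neg hij]
  have hbb1 : ∀ i : Fin 3, eta (b i) (b i) = 1 := fun i => by rw [hb, if_pos rfl]
  set B : Fin 4 → V4 := ![v, b 0, b 1, b 2] with hB
  have key : ∀ (w : V4) (g : Fin 4 → ℝ), eta w (∑ i, g i • B i) =
      g 0 * eta w v + g 1 * eta w (b 0) + g 2 * eta w (b 1) + g 3 * eta w (b 2) := by
    intro w g
    rw [Fin.sum_univ_four]
    simp only [hB, Matrix.cons_val_zero, Matrix.cons_val_one, Matrix.head_cons,
      Matrix.cons_val_two, Matrix.tail_cons, Matrix.cons_val_three]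
    simp only [eta, Pi.add_apply, Pi.smul_apply, smul_eq_mul]; ring
  have hli : LinearIndependent ℝ B := by
    rw [Fintype.linearIndependent_iff]
    intro g hg
    have h0 := key v g; have h1 := key (b 0) g; have h2 := key (b 1) g; have h3 := key (b 2) g
    rw [hg, eta_zero_right, hv, hvb 0, hvb 1, hvb 2] at h0
    rw [hg, eta_zero_right, hbv 0, hbb1 0, hbb 0 1 (by decide), hbb 0 2 (by decide)] at h1
    rw [hg, eta_zero_right, hbv 1, hbb1 1, hbb 1 0 (by decide), hbb 1 2 (by decide)] at h2
    rw [hg, eta_zero_right, hbv 2, hbb1 2, hbb 2 0 (by decide), hbb 2 1 (by decide)] at h3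
    have e0 : g 0 = 0 := by linarith
    have e1 : g 1 = 0 := by linarith
    have e2 : g 2 = 0 := by linarith
    have e3 : g 3 = 0 := by linarith
    intro i; fin_cases i
    · exact e0
    · exact e1
    · exact e2
    · exact e3
  have hcard : Fintype.card (Fin 4) = Module.finrank ℝ V4 := by
    simp [Module.finrank_fintype_fun_eq_card]
  let Bb : Module.Basis (Fin 4) ℝ V4 := basisOfLinearIndependentOfCardEqFinrank hli hcard
  have hBb : ∀ i, Bb i = B i := fun i => by
    simp [Bb, coe_basisOfLinearIndependentOfCardEqFinrank]
  set w : V4 := -(eta v u) • v + eta (b 0) u • b 0 + eta (b 1) u • b 1 + eta (b 2) u • b 2 - u with hw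
  have expand : ∀ z : V4, eta z w = -(eta v u) * eta z v + eta (b 0) u * eta z (b 0)
      + eta (b 1) u * eta z (b 1) + eta (b 2) u * eta z (b 2) - eta z u := by
    intro z
    simp only [hw, eta, Pi.add_apply, Pi.sub_apply, Pi.smul_apply, smul_eq_mul]; ring
  have hwv : eta v w = 0 := by
    rw [expand, hv, hvb 0, hvb 1, hvb 2, hsym v u]; ring
  have hwb : ∀ i : Fin 3, eta (b i) w = 0 := by
    intro i
    fin_cases i
    · show eta (b 0) w = 0
      rw [expand, hbv 0, hbb1 0, hbb 0 1 (by decide), hbb 0 2 (by decide), hsym (b 0) u]; ring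
    · show eta (b 1) w = 0
      rw [expand, hbv 1, hbb1 1, hbb 1 0 (by decide), hbb 1 2 (by decide), hsym (b 1) u]; ring
    · show eta (b 2) w = 0
      rw [expand, hbv 2, hbb1 2, hbb 2 0 (by decide), hbb 2 1 (by decide), hsym (b 2) u]; ring
  have hwB : ∀ i : Fin 4, eta (B i) w = 0 := by
    intro i; fin_cases i
    · exact hwv
    · exact hwb 0
    · exact hwb 1
    · exact hwb 2
  have hall : ∀ z : V4, eta z w = 0 := by
    intro z
    rw [← Bb.sum_repr z]
    have e : eta (∑ i, Bb.repr z i • Bb i) w = ∑ i, Bb.repr z i * eta (Bb i) w := by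
      rw [Fin.sum_univ_four, Fin.sum_univ_four]
      simp only [eta, Pi.add_apply, Pi.smul_apply, smul_eq_mul]; ring
    rw [e]
    have : ∀ i : Fin 4, eta (Bb i) w = 0 := fun i => by rw [hBb]; exact hwB i
    simp [this]
  have hw0 : w = 0 := by
    funext k
    fin_cases k
    · have := hall ![(-1 : ℝ), 0, 0, 0]
      simp only [eta] at this; norm_num at this; simpa using this
    · have := hall ![(0 : ℝ), 1, 0, 0]
      simp only [eta] at this; norm_num at this; simpa using this
    · have := hall ![(0 : ℝ), 0, 1, 0]
      simp only [eta] at this; norm_num at this; simpa using this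
    · have := hall ![(0 : ℝ), 0, 0, 1]
      simp only [eta] at this; norm_num at this; simpa using this
  exact (sub_eq_zero.mp (hw ▸ hw0)).symm

lemma eta_expand (v : V4) (hv : eta v v = -1)
    (b : Fin 3 → V4) (hb : ∀ i j, eta (b i) (b j) = if i = j then 1 else 0)
    (hvb : ∀ i, eta v (b i) = 0) (x y : V4) :
    eta x y = -(eta v x * eta v y) + eta (b 0) x * eta (b 0) y
      + eta (b 1) x * eta (b 1) y + eta (b 2) x * eta (b 2) y := by
  conv_lhs => rw [complete v hv b hb hvb x]
  rw [eta_add_left, eta_add_left, eta_add_left, eta_smul_left, eta_smul_left,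
    eta_smul_left, eta_smul_left]
  ring

/-! ### proj lemmas -/

lemma proj_def (v x : V4) : proj v x = x + eta v x • v := rfl
lemma proj_add (v x y : V4) : proj v (x + y) = proj v x + proj v y := by
  simp only [proj, eta_add_right]; module
lemma proj_smul (v : V4) (c : ℝ) (x : V4) : proj v (c • x) = c • proj v x := by
  simp only [proj, eta_smul_right]; module
lemma proj_sub (v x y : V4) : proj v (x - y) = proj v x - proj v y := by
  simp only [proj, eta_sub_right]; module
lemma proj_zero (v : V4) : proj v 0 = 0 := by
  simp [proj, eta_zero_right]
lemma eta_v_proj (v : V4) (hv : eta v v = -1) (x : V4) : eta v (proj v x) = 0 := by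
  rw [proj, eta_add_right, eta_smul_right, hv]; ring
lemma proj_v (v : V4) (hv : eta v v = -1) : proj v v = 0 := by
  rw [proj, hv]; module
lemma proj_proj (v : V4) (hv : eta v v = -1) (x : V4) : proj v (proj v x) = proj v x := by
  rw [proj_def v (proj v x), eta_v_proj v hv, zero_smul, add_zero]
lemma eta_proj_left (v x y : V4) : eta (proj v x) y = eta x y + eta v x * eta v y := by
  rw [proj, eta_add_left, eta_smul_left]
lemma eta_proj_right (v x y : V4) : eta x (proj v y) = eta x y + eta v y * eta x v := by
  rw [proj, eta_add_right, eta_smul_right]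
lemma proj_smul_v (v : V4) (hv : eta v v = -1) (c : ℝ) : proj v (c • v) = 0 := by
  rw [proj, eta_smul_right, hv]; module

/-! ### linearity helpers -/

lemma IsLin.comb {f : V4 → V4} (hf : IsLin f) (c0 c1 c2 c3 : ℝ) (x0 x1 x2 x3 : V4) :
    f (c0 • x0 + c1 • x1 + c2 • x2 + c3 • x3)
      = c0 • f x0 + c1 • f x1 + c2 • f x2 + c3 • f x3 := by
  rw [hf.1, hf.1, hf.1, hf.2, hf.2, hf.2, hf.2]

lemma IsLin.comb2 {f : V4 → V4} (hf : IsLin f) (c : ℝ) (a x : V4) :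
    f (a + c • x) = f a + c • f x := by rw [hf.1, hf.2]

lemma comb4 (F : V4 → V4 → V4) (hadd : ∀ u u', F (u + u') = F u + F u')
    (hsmul : ∀ (c : ℝ) u, F (c • u) = c • F u) (c0 c1 c2 c3 : ℝ) (u0 u1 u2 u3 x : V4) :
    F (c0 • u0 + c1 • u1 + c2 • u2 + c3 • u3) x
      = c0 • F u0 x + c1 • F u1 x + c2 • F u2 x + c3 • F u3 x := by
  rw [hadd, hadd, hadd, hsmul, hsmul, hsmul, hsmul]
  simp [Pi.add_apply, Pi.smul_apply]

/-! ### The construction -/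

def Av (v : V4) (dv : V4 → V4) (b : Fin 3 → V4) (db : Fin 3 → V4 → V4) (x : V4) : V4 :=
  eta v x • dv v - eta (b 0) x • db 0 v - eta (b 1) x • db 1 v - eta (b 2) x • db 2 v

def Ai (v : V4) (dv : V4 → V4) (b : Fin 3 → V4) (om : V4 → V4 → V4) (i : Fin 3) (x : V4) : V4 :=
  proj v (om (b i) (proj v x)) - eta (dv (b i)) x • v + eta v x • dv (b i)

def omS (v : V4) (dv : V4 → V4) (b : Fin 3 → V4) (db : Fin 3 → V4 → V4)
    (om : V4 → V4 → V4) (u x : V4) : V4 :=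
  -(eta v u) • Av v dv b db x + eta (b 0) u • Ai v dv b om 0 x
    + eta (b 1) u • Ai v dv b om 1 x + eta (b 2) u • Ai v dv b om 2 x

def Sdef (v : V4) (dv : V4 → V4) (b : Fin 3 → V4) (db : Fin 3 → V4 → V4)
    (om : V4 → V4 → V4) (u x : V4) : V4 :=
  om u x - omS v dv b db om u x

/-- Every connection form `ω` decomposes uniquely as `ω = ωˢ + S` with
`ωˢ` semi-teleparallel w.r.t. `{v, b₁, b₂, b₃}` and `S` a 1-form with η-skew values whose
spatial part in the triad directions vanishes: `h ∘ S(bᵢ) ∘ h = 0` for `i = 1,2,3`. -/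
theorem statement5 (v : V4) (hv : eta v v = -1)
    (dv : V4 → V4) (hdvlin : IsLin dv) (hdvorth : ∀ u, eta v (dv u) = 0)
    (b : Fin 3 → V4) (hb : ∀ i j, eta (b i) (b j) = if i = j then 1 else 0)
    (hvb : ∀ i, eta v (b i) = 0)
    (db : Fin 3 → V4 → V4) (hdblin : ∀ i, IsLin (db i))
    (hcompat1 : ∀ i u, eta v (db i u) + eta (b i) (dv u) = 0)
    (hcompat2 : ∀ i j u, eta (b i) (db j u) + eta (b j) (db i u) = 0)
    (ω : V4 → V4 → V4) (hω : ConnForm ω) :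
    ∃! p : (V4 → V4 → V4) × (V4 → V4 → V4), GoodPairS v dv b db ω p := by
  obtain ⟨hωadd, hωsmul, hωlin, hωskew⟩ := hω
  have hsym := eta_symm
  have hbv : ∀ i, eta (b i) v = 0 := fun i => by rw [eta_symm]; exact hvb i
  have hbb : ∀ i j : Fin 3, i ≠ j → eta (b i) (b j) = 0 := fun i j hij => by
    rw [hb, if_neg hij]
  have hbb1 : ∀ i : Fin 3, eta (b i) (b i) = 1 := fun i => by rw [hb, if_pos rfl]
  have hω0 : ∀ u, ω u 0 = 0 := by
    intro u
    have := (hωlin u).2 0 0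
    simpa using this
  have hdvorth' : ∀ u, eta (dv u) v = 0 := fun u => by rw [eta_symm]; exact hdvorth u
  have hq0 : ∀ i, eta v (db i v) = -(eta (b i) (dv v)) := fun i => by
    have := hcompat1 i v; linarith
  have hr : ∀ i j : Fin 3, eta (b i) (db j v) = -(eta (b j) (db i v)) := fun i j => by
    have := hcompat2 i j v; linarith
  have hrii : ∀ i : Fin 3, eta (b i) (db i v) = 0 := fun i => by
    have := hcompat2 i i v; linarith
  -- skewness of Av
  have skew_Av : ∀ x y, eta (Av v dv b db x) y = - eta x (Av v dv b db y) := by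
    intro x y
    simp only [Av, eta_sub_left, eta_smul_left, eta_sub_right, eta_smul_right]
    rw [eta_expand v hv b hb hvb (dv v) y, eta_expand v hv b hb hvb (db 0 v) y,
      eta_expand v hv b hb hvb (db 1 v) y, eta_expand v hv b hb hvb (db 2 v) y,
      eta_expand v hv b hb hvb x (dv v), eta_expand v hv b hb hvb x (db 0 v),
      eta_expand v hv b hb hvb x (db 1 v), eta_expand v hv b hb hvb x (db 2 v)]
    rw [hdvorth v, hq0 0, hq0 1, hq0 2, hr 0 1, hr 0 2, hr 1 2,
      hrii 0, hrii 1, hrii 2]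
    ring
  -- skewness of Ai
  have skew_Ai : ∀ (i : Fin 3) x y,
      eta (Ai v dv b ω i x) y = - eta x (Ai v dv b ω i y) := by
    intro i x y
    have r1 := hωskew (b i) (proj v x) (proj v y)
    rw [eta_proj_right, eta_proj_left] at r1
    simp only [Ai, eta_sub_left, eta_add_left, eta_smul_left, eta_sub_right, eta_add_right,
      eta_smul_right, eta_proj_left, eta_proj_right]
    linear_combination r1 + eta v y * hsym v (ω (b i) (proj v x))
      + eta v (ω (b i) (proj v y)) * hsym x v
      + eta v y * hsym x (dv (b i)) + eta (dv (b i)) y * hsym v x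
  -- linearity of Av, Ai in x
  have Av_add : ∀ x y, Av v dv b db (x + y) = Av v dv b db x + Av v dv b db y := by
    intro x y
    simp only [Av, eta_add_right]; module
  have Av_smul : ∀ (c : ℝ) x, Av v dv b db (c • x) = c • Av v dv b db x := by
    intro c x
    simp only [Av, eta_smul_right]; module
  have Ai_add : ∀ (i : Fin 3) x y,
      Ai v dv b ω i (x + y) = Ai v dv b ω i x + Ai v dv b ω i y := by
    intro i x y
    simp only [Ai, proj_add, (hωlin (b i)).1, eta_add_right]; module
  have Ai_smul : ∀ (i : Fin 3) (c : ℝ) x,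
      Ai v dv b ω i (c • x) = c • Ai v dv b ω i x := by
    intro i c x
    simp only [Ai, proj_smul, (hωlin (b i)).2, eta_smul_right]; module
  -- values on the basis
  have Av_v : Av v dv b db v = -(dv v) := by
    simp only [Av]
    rw [hv, hbv 0, hbv 1, hbv 2]; module
  have Av_b : ∀ i, Av v dv b db (b i) = -(db i v) := by
    intro i
    fin_cases i
    · show Av v dv b db (b 0) = -(db 0 v)
      simp only [Av]
      rw [hvb 0, hbb1 0, hbb 1 0 (by decide), hbb 2 0 (by decide)]; module
    · show Av v dv b db (b 1) = -(db 1 v)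
      simp only [Av]
      rw [hvb 1, hbb1 1, hbb 0 1 (by decide), hbb 2 1 (by decide)]; module
    · show Av v dv b db (b 2) = -(db 2 v)
      simp only [Av]
      rw [hvb 2, hbb1 2, hbb 0 2 (by decide), hbb 1 2 (by decide)]; module
  have Ai_v : ∀ i, Ai v dv b ω i v = -(dv (b i)) := by
    intro i
    simp only [Ai]
    rw [proj_v v hv, hω0, proj_zero, hdvorth' (b i), hv]; module
  -- properties of W := omS
  have Wadd : ∀ u u', omS v dv b db ω (u + u') = omS v dv b db ω u + omS v dv b db ω u' := by
    intro u u'; funext x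
    simp only [omS, eta_add_right, Pi.add_apply]; module
  have Wsmul : ∀ (c : ℝ) u, omS v dv b db ω (c • u) = c • omS v dv b db ω u := by
    intro c u; funext x
    simp only [omS, eta_smul_right, Pi.smul_apply]; module
  have Wlin : ∀ u, IsLin (omS v dv b db ω u) := by
    intro u
    constructor
    · intro x y
      simp only [omS, Av_add, Ai_add]; module
    · intro c x
      simp only [omS, Av_smul, Ai_smul]; module
  have Wskew : ∀ u, IsSkew (omS v dv b db ω u) := by
    intro u x y
    simp only [omS, eta_add_left, eta_smul_left, eta_add_right, eta_smul_right]
    linear_combination (-(eta v u)) * skew_Av x y + eta (b 0) u * skew_Ai 0 x y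
      + eta (b 1) u * skew_Ai 1 x y + eta (b 2) u * skew_Ai 2 x y
  have Wst1 : ∀ u, dv u + omS v dv b db ω u v = 0 := by
    intro u
    have hu := complete v hv b hb hvb u
    have hdvu : dv u = -(eta v u) • dv v + eta (b 0) u • dv (b 0)
        + eta (b 1) u • dv (b 1) + eta (b 2) u • dv (b 2) := by
      conv_lhs => rw [hu]
      exact hdvlin.comb _ _ _ _ _ _ _ _
    rw [hdvu]
    simp only [omS, Av_v, Ai_v]
    module
  have Wst2 : ∀ i, db i v + omS v dv b db ω v (b i) = 0 := by
    intro i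
    simp only [omS]
    rw [hv, hbv 0, hbv 1, hbv 2, Av_b i]
    module
  -- omS at b i is Ai
  have W_bi : ∀ i x, omS v dv b db ω (b i) x = Ai v dv b ω i x := by
    intro i x
    fin_cases i
    · show omS v dv b db ω (b 0) x = Ai v dv b ω 0 x
      simp only [omS]
      rw [hvb 0, hbb1 0, hbb 1 0 (by decide), hbb 2 0 (by decide)]; module
    · show omS v dv b db ω (b 1) x = Ai v dv b ω 1 x
      simp only [omS]
      rw [hvb 1, hbb1 1, hbb 0 1 (by decide), hbb 2 1 (by decide)]; module
    · show omS v dv b db ω (b 2) x = Ai v dv b ω 2 x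
      simp only [omS]
      rw [hvb 2, hbb1 2, hbb 0 2 (by decide), hbb 1 2 (by decide)]; module
  -- properties of Sd := Sdef
  have Sadd : ∀ u u', Sdef v dv b db ω (u + u') = Sdef v dv b db ω u + Sdef v dv b db ω u' := by
    intro u u'; funext x
    have h1 : ω (u + u') x = ω u x + ω u' x := by rw [hωadd]; rfl
    have h2 : omS v dv b db ω (u + u') x = omS v dv b db ω u x + omS v dv b db ω u' x := by
      rw [Wadd]; rfl
    simp only [Sdef, Pi.add_apply, h1, h2]; module
  have Ssmul : ∀ (c : ℝ) u, Sdef v dv b db ω (c • u) = c • Sdef v dv b db ω u := by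
    intro c u; funext x
    have h1 : ω (c • u) x = c • ω u x := by rw [hωsmul]; rfl
    have h2 : omS v dv b db ω (c • u) x = c • omS v dv b db ω u x := by
      rw [Wsmul]; rfl
    simp only [Sdef, Pi.smul_apply, h1, h2]; module
  have Slin : ∀ u, IsLin (Sdef v dv b db ω u) := by
    intro u
    constructor
    · intro x y
      simp only [Sdef]
      rw [(hωlin u).1, (Wlin u).1]
      module
    · intro c x
      simp only [Sdef]
      rw [(hωlin u).2, (Wlin u).2]
      module
  have Sskew : ∀ u, IsSkew (Sdef v dv b db ω u) := by
    intro u x y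
    simp only [Sdef, eta_sub_left, eta_sub_right]
    linear_combination hωskew u x y - Wskew u x y
  -- vanishing spatial part
  have Sproj : ∀ i x, proj v (Sdef v dv b db ω (b i) (proj v x)) = 0 := by
    intro i x
    have key : Sdef v dv b db ω (b i) (proj v x)
        = (eta (dv (b i)) (proj v x) - eta v (ω (b i) (proj v x))) • v := by
      simp only [Sdef]
      rw [W_bi]
      simp only [Ai]
      rw [proj_proj v hv, eta_v_proj v hv,
        proj_def v (ω (b i) (proj v x))]
      module
    rw [key, proj_smul_v v hv]
  -- decomposition
  have Wdecomp : ∀ u x, ω u x = omS v dv b db ω u x + Sdef v dv b db ω u x := by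
    intro u x
    simp only [Sdef]; module
  refine ⟨(omS v dv b db ω, Sdef v dv b db ω),
    ⟨⟨Wadd, Wsmul, Wlin, Wskew⟩, ⟨Wst1, Wst2⟩, Sadd, Ssmul, Slin, Sskew, Sproj, Wdecomp⟩, ?_⟩
  -- uniqueness
  rintro ⟨q1, q2⟩ ⟨⟨hq1add, hq1smul, hq1lin, hq1skew⟩, ⟨hst1, hst2⟩, hq2add, hq2smul,
    hq2lin, hq2skew, hq2proj, hdec⟩
  dsimp only at hq1add hq1smul hq1lin hq1skew hst1 hst2 hq2add hq2smul hq2lin hq2skew hq2proj hdec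
  have e1 : q1 v v = -(dv v) := eq_neg_of_add_eq_zero_right (hst1 v)
  have e2 : ∀ i, q1 v (b i) = -(db i v) := fun i =>
    eq_neg_of_add_eq_zero_right (hst2 i)
  have e3 : ∀ i, q1 (b i) v = -(dv (b i)) := fun i =>
    eq_neg_of_add_eq_zero_right (hst1 (b i))
  -- q1 v = Av
  have q1v : ∀ x, q1 v x = Av v dv b db x := by
    intro x
    conv_lhs => rw [complete v hv b hb hvb x]
    rw [(hq1lin v).comb]
    rw [e1, e2 0, e2 1, e2 2]
    simp only [Av]; module
  -- q1 (b i) = Ai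
  have q1b : ∀ i x, q1 (b i) x = Ai v dv b ω i x := by
    intro i x
    have key1 : eta v (q1 (b i) (proj v x)) = eta (dv (b i)) (proj v x) := by
      have hs := hq1skew (b i) v (proj v x)
      rw [e3 i, eta_neg_left] at hs
      have hsv : eta (q1 (b i) v) (proj v x) = - eta v (q1 (b i) (proj v x)) := hq1skew (b i) v (proj v x)
      rw [e3 i, eta_neg_left] at hsv
      linarith [hsv]
    have key2 : proj v (q1 (b i) (proj v x)) = proj v (ω (b i) (proj v x)) := by
      have hd : q1 (b i) (proj v x) = ω (b i) (proj v x) - q2 (b i) (proj v x) := by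
        have := hdec (b i) (proj v x); rw [this]; module
      rw [hd, proj_sub, hq2proj i x, sub_zero]
    have hx1 : x = proj v x + (-(eta v x)) • v := by
      rw [proj_def]; module
    have hfx : q1 (b i) (proj v x)
        = proj v (q1 (b i) (proj v x)) + (-(eta v (q1 (b i) (proj v x)))) • v := by
      conv_rhs => rw [proj_def v (q1 (b i) (proj v x))]
      module
    calc q1 (b i) x = q1 (b i) (proj v x + (-(eta v x)) • v) := by rw [← hx1]
      _ = q1 (b i) (proj v x) + (-(eta v x)) • q1 (b i) v := (hq1lin (b i)).comb2 _ _ _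
      _ = proj v (q1 (b i) (proj v x)) + (-(eta v (q1 (b i) (proj v x)))) • v
            + (-(eta v x)) • (-(dv (b i))) := by rw [← hfx, e3 i]
      _ = Ai v dv b ω i x := by
            rw [key1, key2]
            simp only [Ai]
            have hh : eta (dv (b i)) (proj v x) = eta (dv (b i)) x := by
              rw [eta_proj_right, hdvorth' (b i)]; ring
            rw [hh]; module
  have q1eq : q1 = omS v dv b db ω := by
    funext u x
    have hu := complete v hv b hb hvb u
    have lhs : q1 u x = -(eta v u) • q1 v x + eta (b 0) u • q1 (b 0) x
        + eta (b 1) u • q1 (b 1) x + eta (b 2) u • q1 (b 2) x := by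
      conv_lhs => rw [hu]
      exact comb4 q1 hq1add hq1smul _ _ _ _ _ _ _ _ _
    rw [lhs, q1v, q1b 0, q1b 1, q1b 2]
    rfl
  have q2eq : q2 = Sdef v dv b db ω := by
    funext u x
    have h := hdec u x
    rw [q1eq] at h
    simp only [Sdef]
    rw [h]; module
  rw [Prod.ext_iff]
  exact ⟨q1eq, q2eq⟩
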